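/- Let n ≥ 3, D = diag(I₁, …, Iₙ) real diagonal with distinct positive entries I₁ < … < Iₙ, S orthogonal, C = S D S⁻¹, and Ω^{rs} = S(1_{rs} − 1_{sr})S⁻¹. Let β(X,Y) = I_C⁻¹[C, XY + YX] on so(n), where I_C(X) = XC + CX. Set G¹ = Ω^{12} and G² = Ω^{23} + Ω^{34} + … + Ω^{n−1,n}. Then the smallest linear subspace V of so(n) that contains G¹ and G² and is closed under β (i.e., X, Y ∈ V implies β(X,Y) ∈ V) is all of so(n): iterated applications of β to G¹, G² generate a basis of so(n). -/

import Mathlib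

open Matrix

/-- Square real matrices of size `n`. -/
abbrev Mat (n : ℕ) := Matrix (Fin n) (Fin n) ℝ

/-- The inertia operator `I_C(X) = XC + CX` of the multidimensional rigid body. -/
def IC {n : ℕ} (C X : Mat n) : Mat n := X * C + C * X

/-- Matrix commutator `[A, B] = AB - BA`. -/
def mbracket {n : ℕ} (A B : Mat n) : Mat n := A * B - B * A

/-- A matrix is skew-symmetric, i.e. belongs to `so(n)`. -/
def IsSkew {n : ℕ} (X : Mat n) : Prop := Xᵀ = -X

/-- The principal axis `Ω^{rs} = S Θ^{rs} S⁻¹` with `Θ^{rs} = 1_{rs} − 1_{sr}`.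
Indices are `0`-based: `Om S i j` corresponds to `Ω^{i+1, j+1}` of the paper. -/
noncomputable def Om {n : ℕ} (S : Mat n) (r s : Fin n) : Mat n :=
  S * (Matrix.single r s 1 - Matrix.single s r 1) * S⁻¹

namespace BetaSat

variable {n : ℕ}

noncomputable def EE (r s : Fin n) : Mat n := Matrix.single r s (1:ℝ)
noncomputable def Th (r s : Fin n) : Mat n := EE r s - EE s r

lemma EE_mul_same (r s t : Fin n) : EE r s * EE s t = EE r t := by
  simp [EE, single_mul_single_same]

lemma EE_mul_ne {s t : Fin n} (h : s ≠ t) (r u : Fin n) : EE r s * EE t u = 0 := by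
  exact single_mul_single_of_ne (c := (1:ℝ)) r s t h 1

lemma diag_mul_EE (Iv : Fin n → ℝ) (r s : Fin n) :
    diagonal Iv * EE r s = Iv r • EE r s := by
  ext i j
  simp only [EE, diagonal_mul, Matrix.single, of_apply, Matrix.smul_apply, smul_eq_mul]
  split_ifs with h
  · rw [h.1]
  · simp

lemma EE_mul_diag (Iv : Fin n → ℝ) (r s : Fin n) :
    EE r s * diagonal Iv = Iv s • EE r s := by
  ext i j
  simp only [EE, mul_diagonal, Matrix.single, of_apply, Matrix.smul_apply, smul_eq_mul]
  split_ifs with h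
  · rw [h.2]; ring
  · simp

lemma EE_transpose (r s : Fin n) : (EE r s)ᵀ = EE s r := by
  ext i j
  simp [EE, Matrix.single, transpose_apply, and_comm]

lemma skew_Th (r s : Fin n) : IsSkew (Th r s) := by
  simp only [IsSkew, Th, transpose_sub, EE_transpose, neg_sub]

lemma Th_self (r : Fin n) : Th r r = 0 := by simp [Th]

lemma Th_swap (r s : Fin n) : Th s r = -Th r s := by simp [Th, neg_sub]

lemma anti_mid {r s t : Fin n} (hrs : r ≠ s) (hst : s ≠ t) (hrt : r ≠ t) :
    Th r s * Th s t + Th s t * Th r s = EE r t + EE t r := by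
  simp only [Th, sub_mul, mul_sub, EE_mul_same, EE_mul_ne hst, EE_mul_ne hrs,
    EE_mul_ne hrt, EE_mul_ne hrt.symm, EE_mul_ne hst.symm, EE_mul_ne hrs.symm]
  abel

lemma anti_mid2 {r s t : Fin n} (hrs : r ≠ s) (hst : s ≠ t) (hrt : r ≠ t) :
    Th r s * Th t s + Th t s * Th r s = -(EE r t + EE t r) := by
  have h := anti_mid hrs hst hrt
  rw [show Th t s = -Th s t from Th_swap s t, mul_neg, neg_mul]
  rw [← neg_add, h]

lemma anti_first {p r t : Fin n} (hpr : p ≠ r) (hpt : p ≠ t) (hrt : r ≠ t) :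
    Th p r * Th p t + Th p t * Th p r = -(EE r t + EE t r) := by
  have h := anti_mid (r := r) (s := p) (t := t) hpr.symm hpt hrt
  rw [show Th p r = -Th r p from Th_swap r p, neg_mul, mul_neg, ← neg_add, ← h]

lemma anti_disj {r s t u : Fin n} (hrt : r ≠ t) (hru : r ≠ u) (hst : s ≠ t) (hsu : s ≠ u) :
    Th r s * Th t u + Th t u * Th r s = 0 := by
  simp only [Th, sub_mul, mul_sub, EE_mul_ne hst, EE_mul_ne hsu, EE_mul_ne hrt,
    EE_mul_ne hru, EE_mul_ne hst.symm, EE_mul_ne hsu.symm, EE_mul_ne hrt.symm,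
    EE_mul_ne hru.symm]
  abel

lemma IC_theta (Iv : Fin n → ℝ) (r t : Fin n) :
    IC (diagonal Iv) (Th r t) = (Iv r + Iv t) • Th r t := by
  simp only [IC, Th, sub_mul, mul_sub, diag_mul_EE, EE_mul_diag]
  module

lemma mb_sym (Iv : Fin n → ℝ) (r t : Fin n) :
    mbracket (diagonal Iv) (EE r t + EE t r) = (Iv r - Iv t) • Th r t := by
  simp only [mbracket, Th, add_mul, mul_add, diag_mul_EE, EE_mul_diag]
  module

lemma IC_smul (C : Mat n) (c : ℝ) (B : Mat n) : IC C (c • B) = c • IC C B := by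
  simp [IC, smul_add, smul_mul_assoc, mul_smul_comm]

lemma IC_sub (C : Mat n) (B B' : Mat n) : IC C (B - B') = IC C B - IC C B' := by
  simp only [IC, sub_mul, mul_sub]; abel

lemma mb_sub (A P Q : Mat n) : mbracket A (P - Q) = mbracket A P - mbracket A Q := by
  simp only [mbracket, mul_sub, sub_mul]; abel


lemma skew_comb (c c' : ℝ) (r t r' t' : Fin n) :
    IsSkew (c • Th r t - c' • Th r' t') := by
  have h1 : (Th r t)ᵀ = -Th r t := skew_Th r t
  have h2 : (Th r' t')ᵀ = -Th r' t' := skew_Th r' t'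
  simp only [IsSkew, transpose_sub, transpose_smul, h1, h2, smul_neg, neg_sub]
  abel

section step
variable (Iv : Fin n → ℝ) (hpos : ∀ i, 0 < Iv i) (W : Submodule ℝ (Mat n))
  (hcl : ∀ X ∈ W, ∀ Y ∈ W, ∀ B : Mat n, IsSkew B →
    IC (diagonal Iv) B = mbracket (diagonal Iv) (X * Y + Y * X) → B ∈ W)

include hpos hcl

lemma mem_step {X Y : Mat n} (hX : X ∈ W) (hY : Y ∈ W) {r t : Fin n}
    (hne : Iv r ≠ Iv t) (hA : X * Y + Y * X = EE r t + EE t r) : Th r t ∈ W := by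
  set c : ℝ := (Iv r - Iv t) / (Iv r + Iv t) with hc
  have hsum : Iv r + Iv t ≠ 0 := (add_pos (hpos r) (hpos t)).ne'
  have hcne : c ≠ 0 := div_ne_zero (sub_ne_zero.mpr hne) hsum
  have hB : (c • Th r t) ∈ W := by
    apply hcl X hX Y hY
    · have := skew_comb (n := n) c 0 r t r t
      simpa using this
    · rw [hA, mb_sym, IC_smul, IC_theta, smul_smul, hc, div_mul_cancel₀ _ hsum]
  have h2 := W.smul_mem c⁻¹ hB
  rwa [smul_smul, inv_mul_cancel₀ hcne, one_smul] at h2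

lemma mem_step2 {X Y : Mat n} (hX : X ∈ W) (hY : Y ∈ W) {r t r' t' : Fin n}
    (hne : Iv r ≠ Iv t) (hne' : Iv r' ≠ Iv t')
    (hA : X * Y + Y * X = (EE r t + EE t r) - (EE r' t' + EE t' r'))
    (hprev : Th r' t' ∈ W) : Th r t ∈ W := by
  set c : ℝ := (Iv r - Iv t) / (Iv r + Iv t) with hc
  set c' : ℝ := (Iv r' - Iv t') / (Iv r' + Iv t') with hc'
  have hsum : Iv r + Iv t ≠ 0 := (add_pos (hpos r) (hpos t)).ne'
  have hsum' : Iv r' + Iv t' ≠ 0 := (add_pos (hpos r') (hpos t')).ne'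
  have hcne : c ≠ 0 := div_ne_zero (sub_ne_zero.mpr hne) hsum
  have hB : (c • Th r t - c' • Th r' t') ∈ W := by
    apply hcl X hX Y hY
    · exact skew_comb c c' r t r' t'
    · rw [hA, mb_sub, mb_sym, mb_sym, IC_sub, IC_smul, IC_smul, IC_theta, IC_theta,
        smul_smul, smul_smul, hc, hc', div_mul_cancel₀ _ hsum, div_mul_cancel₀ _ hsum']
  have h3 : (c • Th r t) ∈ W := by
    have := W.add_mem hB (W.smul_mem c' hprev)
    simpa using this
  have h2 := W.smul_mem c⁻¹ h3
  rwa [smul_smul, inv_mul_cancel₀ hcne, one_smul] at h2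

end step

noncomputable def G2 (n : ℕ) : Mat n :=
  ∑ j : Fin (n - 2), Th ⟨j.1 + 1, by have := j.2; omega⟩ ⟨j.1 + 2, by have := j.2; omega⟩

lemma mk_ne {a b : ℕ} (h : a ≠ b) {ha : a < n} {hb : b < n} :
    (⟨a, ha⟩ : Fin n) ≠ ⟨b, hb⟩ := fun he => h (congrArg Fin.val he)

lemma mk_eq {a b : ℕ} (h : a = b) {ha : a < n} {hb : b < n} :
    (⟨a, ha⟩ : Fin n) = ⟨b, hb⟩ := Fin.ext h

lemma anti_G2_one (hn : 3 ≤ n) :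
    Th ⟨0, ((by decide : 0 < 3).trans_le hn)⟩ ⟨1, ((by decide : 1 < 3).trans_le hn)⟩ * G2 n + G2 n * Th ⟨0, ((by decide : 0 < 3).trans_le hn)⟩ ⟨1, ((by decide : 1 < 3).trans_le hn)⟩
      = EE ⟨0, ((by decide : 0 < 3).trans_le hn)⟩ ⟨2, by omega⟩ + EE ⟨2, by omega⟩ ⟨0, ((by decide : 0 < 3).trans_le hn)⟩ := by
  rw [G2, Finset.mul_sum, Finset.sum_mul, ← Finset.sum_add_distrib]
  have hterm : ∀ j : Fin (n - 2),
      Th (⟨0, by omega⟩ : Fin n) ⟨1, by omega⟩ *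
          Th ⟨j.1 + 1, by have := j.2; omega⟩ ⟨j.1 + 2, by have := j.2; omega⟩
        + Th ⟨j.1 + 1, by have := j.2; omega⟩ ⟨j.1 + 2, by have := j.2; omega⟩ *
          Th ⟨0, by omega⟩ ⟨1, by omega⟩
      = if j = (⟨0, by omega⟩ : Fin (n - 2)) then
          EE ⟨0, by omega⟩ ⟨2, by omega⟩ + EE ⟨2, by omega⟩ ⟨0, by omega⟩ else 0 := by
    intro j
    by_cases hj : j = ⟨0, by omega⟩
    · rw [if_pos hj]
      have h1 : j.1 = 0 := by rw [hj]
      have e1 : j.1 + 1 = 1 := by omega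
      have e2 : j.1 + 2 = 2 := by omega
      simp only [e1, e2]
      exact anti_mid (mk_ne (by omega)) (mk_ne (by omega))
        (mk_ne (by omega))
    · rw [if_neg hj]
      have h1 : j.1 ≠ 0 := fun h => hj (Fin.ext h)
      exact anti_disj (mk_ne (by omega)) (mk_ne (by omega))
        (mk_ne (by omega)) (mk_ne (by omega))
  rw [Finset.sum_congr rfl fun j _ => hterm j, Finset.sum_ite_eq' Finset.univ,
    if_pos (Finset.mem_univ _)]

lemma anti_G2_big (m : ℕ) (h2 : 2 ≤ m) (hm : m ≤ n - 2) (hn4 : 4 ≤ n) :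
    Th ⟨0, by omega⟩ ⟨m, by omega⟩ * G2 n + G2 n * Th ⟨0, by omega⟩ ⟨m, by omega⟩
      = (EE ⟨0, by omega⟩ ⟨m + 1, by omega⟩ + EE ⟨m + 1, by omega⟩ ⟨0, by omega⟩)
        - (EE ⟨0, by omega⟩ ⟨m - 1, by omega⟩ + EE ⟨m - 1, by omega⟩ ⟨0, by omega⟩) := by
  rw [G2, Finset.mul_sum, Finset.sum_mul, ← Finset.sum_add_distrib]
  have hterm : ∀ j : Fin (n - 2),
      Th (⟨0, by omega⟩ : Fin n) ⟨m, by omega⟩ *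
          Th ⟨j.1 + 1, by have := j.2; omega⟩ ⟨j.1 + 2, by have := j.2; omega⟩
        + Th ⟨j.1 + 1, by have := j.2; omega⟩ ⟨j.1 + 2, by have := j.2; omega⟩ *
          Th ⟨0, by omega⟩ ⟨m, by omega⟩
      = (if j = (⟨m - 2, by omega⟩ : Fin (n - 2)) then
            -(EE ⟨0, by omega⟩ ⟨m - 1, by omega⟩ + EE ⟨m - 1, by omega⟩ ⟨0, by omega⟩) else 0)
        + (if j = (⟨m - 1, by omega⟩ : Fin (n - 2)) then
            EE ⟨0, by omega⟩ ⟨m + 1, by omega⟩ + EE ⟨m + 1, by omega⟩ ⟨0, by omega⟩ else 0) := by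
    intro j
    by_cases hj1 : j = ⟨m - 2, by omega⟩
    · have h1 : j.1 = m - 2 := by rw [hj1]
      have hne2 : j ≠ ⟨m - 1, by omega⟩ := by
        intro h
        have hv : j.1 = m - 1 := by rw [h]
        omega
      rw [if_pos hj1, if_neg hne2, add_zero]
      have e1 : j.1 + 1 = m - 1 := by omega
      have e2 : j.1 + 2 = m := by omega
      simp only [e1, e2]
      exact anti_mid2 (mk_ne (by omega)) (mk_ne (by omega))
        (mk_ne (by omega))
    · by_cases hj2 : j = ⟨m - 1, by omega⟩
      · have h1 : j.1 = m - 1 := by rw [hj2]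
        rw [if_neg hj1, if_pos hj2, zero_add]
        have e1 : j.1 + 1 = m := by omega
        have e2 : j.1 + 2 = m + 1 := by omega
        simp only [e1, e2]
        exact anti_mid (mk_ne (by omega)) (mk_ne (by omega))
          (mk_ne (by omega))
      · rw [if_neg hj1, if_neg hj2, add_zero]
        have h1 : j.1 ≠ m - 2 := fun h => hj1 (Fin.ext h)
        have h2' : j.1 ≠ m - 1 := fun h => hj2 (Fin.ext h)
        exact anti_disj (mk_ne (by omega)) (mk_ne (by omega))
          (mk_ne (by omega)) (mk_ne (by omega))
  rw [Finset.sum_congr rfl fun j _ => hterm j, Finset.sum_add_distrib,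
    Finset.sum_ite_eq' Finset.univ, Finset.sum_ite_eq' Finset.univ,
    if_pos (Finset.mem_univ _), if_pos (Finset.mem_univ _)]
  abel

lemma key (hn : 3 ≤ n) (Iv : Fin n → ℝ) (hpos : ∀ i, 0 < Iv i) (hmono : StrictMono Iv)
    (W : Submodule ℝ (Mat n))
    (hG1 : Th ⟨0, (by decide : 0 < 3).trans_le hn⟩ ⟨1, (by decide : 1 < 3).trans_le hn⟩ ∈ W)
    (hG2 : G2 n ∈ W)
    (hcl : ∀ X ∈ W, ∀ Y ∈ W, ∀ B : Mat n, IsSkew B →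
      IC (diagonal Iv) B = mbracket (diagonal Iv) (X * Y + Y * X) → B ∈ W) :
    ∀ Z : Mat n, IsSkew Z → Z ∈ W := by
  have h0 : (0 : ℕ) < n := by omega
  have hIvne : ∀ {a b : Fin n}, a ≠ b → Iv a ≠ Iv b := fun h => hmono.injective.ne h
  have main : ∀ k : ℕ, ∀ hk : k < n, 1 ≤ k → Th ⟨0, h0⟩ ⟨k, hk⟩ ∈ W := by
    intro k
    induction k using Nat.strong_induction_on with
    | _ k ih =>
      intro hk hk1
      by_cases e1 : k = 1
      · subst e1; exact hG1
      by_cases e2 : k = 2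
      · subst e2
        exact mem_step Iv hpos W hcl hG1 hG2 (hIvne (mk_ne (by omega)))
          (anti_G2_one hn)
      · -- k ≥ 3
        have hk3 : 3 ≤ k := by omega
        have hn4 : 4 ≤ n := by omega
        set m := k - 1 with hmdef
        have hm2 : 2 ≤ m := by omega
        have hmn : m ≤ n - 2 := by omega
        have hThm : Th ⟨0, h0⟩ ⟨m, by omega⟩ ∈ W := ih m (by omega) (by omega) (by omega)
        have hThm1 : Th ⟨0, h0⟩ ⟨m - 1, by omega⟩ ∈ W := ih (m - 1) (by omega) (by omega) (by omega)
        have hgoal : Th ⟨0, h0⟩ ⟨m + 1, by omega⟩ ∈ W := by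
          exact mem_step2 Iv hpos W hcl hThm hG2
            (hIvne (mk_ne (by omega))) (hIvne (mk_ne (by omega)))
            (anti_G2_big m hm2 hmn hn4) hThm1
        have ek : (⟨k, hk⟩ : Fin n) = ⟨m + 1, by omega⟩ := mk_eq (by omega)
        rw [ek]; exact hgoal
  have hLT : ∀ r t : Fin n, r.1 < t.1 → Th r t ∈ W := by
    intro r t h
    by_cases hr0 : r.1 = 0
    · have hr : r = ⟨0, h0⟩ := Fin.ext hr0
      have := main t.1 t.2 (by omega)
      rw [hr]
      simpa [Fin.eta] using this
    · have hXmem : -(Th ⟨0, h0⟩ ⟨r.1, r.2⟩) ∈ W := W.neg_mem (main r.1 r.2 (by omega))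
      have hYmem : Th ⟨0, h0⟩ ⟨t.1, t.2⟩ ∈ W := main t.1 t.2 (by omega)
      have hanti := anti_first (p := (⟨0, h0⟩ : Fin n)) (r := ⟨r.1, r.2⟩) (t := ⟨t.1, t.2⟩)
        (mk_ne (by omega)) (mk_ne (by omega)) (mk_ne (by omega))
      have hA : (-(Th ⟨0, h0⟩ ⟨r.1, r.2⟩)) * Th ⟨0, h0⟩ ⟨t.1, t.2⟩
          + Th ⟨0, h0⟩ ⟨t.1, t.2⟩ * (-(Th ⟨0, h0⟩ ⟨r.1, r.2⟩))
          = EE ⟨r.1, r.2⟩ ⟨t.1, t.2⟩ + EE ⟨t.1, t.2⟩ ⟨r.1, r.2⟩ := by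
        rw [neg_mul, mul_neg, ← neg_add, hanti, neg_neg]
      have := mem_step Iv hpos W hcl hXmem hYmem
        (hIvne (mk_ne (by omega))) hA
      simpa [Fin.eta] using this
  have hAll : ∀ r t : Fin n, Th r t ∈ W := by
    intro r t
    rcases Nat.lt_trichotomy r.1 t.1 with h | h | h
    · exact hLT r t h
    · have : r = t := Fin.ext h
      rw [this, Th_self]; exact W.zero_mem
    · rw [Th_swap]; exact W.neg_mem (hLT t r h)
  intro Z hZ
  have h1 : ∑ r : Fin n, ∑ t : Fin n, Z r t • EE r t = Z := by
    conv_rhs => rw [matrix_eq_sum_single Z]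
    simp [EE, smul_single]
  have h2 : ∑ r : Fin n, ∑ t : Fin n, Z r t • EE t r = Zᵀ := by
    rw [Finset.sum_comm]
    conv_rhs => rw [matrix_eq_sum_single Zᵀ]
    simp [EE, smul_single, transpose_apply]
  have hrep : ∑ r : Fin n, ∑ t : Fin n, Z r t • Th r t = Z - Zᵀ := by
    simp only [Th, smul_sub, Finset.sum_sub_distrib, h1, h2]
  have hmem : (2⁻¹ : ℝ) • (∑ r : Fin n, ∑ t : Fin n, Z r t • Th r t) ∈ W :=
    W.smul_mem _ (Submodule.sum_mem _ fun r _ => Submodule.sum_mem _ fun t _ =>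
      W.smul_mem _ (hAll r t))
  have hZZ : (2⁻¹ : ℝ) • (∑ r : Fin n, ∑ t : Fin n, Z r t • Th r t) = Z := by
    rw [hrep, (hZ : Zᵀ = -Z)]
    module
  rwa [hZZ] at hmem

end BetaSat

set_option maxHeartbeats 800000 in
open BetaSat in
/-- **Saturation.**  With `C = S·diag(I₁,…,Iₙ)·S⁻¹` (`0 < I₁ < … < Iₙ`, `S` orthogonal),
`G¹ = Ω^{12}` and `G² = Ω^{23} + … + Ω^{n−1,n}`, the smallest linear subspace of `so(n)`
containing `G¹, G²` and closed under `β(X,Y) = I_C⁻¹[C, XY + YX]` (encoded: it contains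
every `B ∈ so(n)` with `I_C(B) = [C, XY + YX]` for `X, Y` in the subspace) is all of
`so(n)`: any such subspace contains every skew-symmetric matrix. -/
theorem beta_iterations_saturate_so_n
    (n : ℕ) (hn : 3 ≤ n) (Iv : Fin n → ℝ) (hpos : ∀ i, 0 < Iv i)
    (hmono : StrictMono Iv) (S : Mat n) (hS : Sᵀ * S = 1) :
    ∀ V : Submodule ℝ (Mat n),
      (∀ X ∈ V, IsSkew X) →
      Om S ⟨0, by omega⟩ ⟨1, by omega⟩ ∈ V →
      (∑ j : Fin (n - 2),
        Om S ⟨j.1 + 1, by have := j.2; omega⟩ ⟨j.1 + 2, by have := j.2; omega⟩) ∈ V →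
      (∀ X ∈ V, ∀ Y ∈ V, ∀ B : Mat n, IsSkew B →
        IC (S * diagonal Iv * S⁻¹) B = mbracket (S * diagonal Iv * S⁻¹) (X * Y + Y * X) →
        B ∈ V) →
      ∀ Z : Mat n, IsSkew Z → Z ∈ V := by
  intro V hVskew hG1V hG2V hclV Z hZ
  have hS' : S * Sᵀ = 1 := mul_eq_one_comm.mp hS
  have hSi : S⁻¹ = Sᵀ := inv_eq_left_inv hS
  have l1 : ∀ M : Mat n, Sᵀ * (S * M) = M := fun M => by rw [← mul_assoc, hS, one_mul]
  have l2 : ∀ M : Mat n, S * (Sᵀ * M) = M := fun M => by rw [← mul_assoc, hS', one_mul]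
  set L : Mat n →ₗ[ℝ] Mat n := (LinearMap.mulLeft ℝ S).comp (LinearMap.mulRight ℝ Sᵀ) with hL
  set W : Submodule ℝ (Mat n) := V.comap L with hW
  have hmem : ∀ M : Mat n, M ∈ W ↔ S * (M * Sᵀ) ∈ V := fun M => Iff.rfl
  have hg1 : Th ⟨0, by omega⟩ ⟨1, by omega⟩ ∈ W := by
    rw [hmem]
    rw [Om, hSi] at hG1V
    simpa only [Th, EE, mul_assoc] using hG1V
  have hg2 : G2 n ∈ W := by
    rw [hmem]
    simp only [Om, hSi] at hG2V
    rw [G2, Finset.sum_mul, Finset.mul_sum]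
    simpa only [Th, EE, mul_assoc] using hG2V
  have hcl : ∀ X ∈ W, ∀ Y ∈ W, ∀ B : Mat n, IsSkew B →
      IC (diagonal Iv) B = mbracket (diagonal Iv) (X * Y + Y * X) → B ∈ W := by
    intro X hX Y hY B hB hEq
    rw [hmem] at hX hY ⊢
    have ICconj : ∀ B' : Mat n, IC (S * diagonal Iv * S⁻¹) (S * (B' * Sᵀ))
        = S * (IC (diagonal Iv) B' * Sᵀ) := by
      intro B'; rw [hSi]; simp only [IC, mul_add, add_mul, mul_assoc, l1]
    have mbconj : ∀ A : Mat n, mbracket (S * diagonal Iv * S⁻¹) (S * (A * Sᵀ))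
        = S * (mbracket (diagonal Iv) A * Sᵀ) := by
      intro A; rw [hSi]; simp only [mbracket, mul_sub, sub_mul, mul_assoc, l1]
    have anticonj : (S * (X * Sᵀ)) * (S * (Y * Sᵀ)) + (S * (Y * Sᵀ)) * (S * (X * Sᵀ))
        = S * ((X * Y + Y * X) * Sᵀ) := by
      simp only [mul_add, add_mul, mul_assoc, l1]
    have hBskew : IsSkew (S * (B * Sᵀ)) := by
      have hBt : Bᵀ = -B := hB
      show (S * (B * Sᵀ))ᵀ = -(S * (B * Sᵀ))
      simp only [transpose_mul, transpose_transpose, hBt, mul_neg, neg_mul, mul_assoc]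
    exact hclV _ hX _ hY _ hBskew (by rw [anticonj, ICconj, mbconj, hEq])
  have hres := key hn Iv hpos hmono W hg1 hg2 hcl (Sᵀ * Z * S)
    (by have hZt : Zᵀ = -Z := hZ
        show (Sᵀ * Z * S)ᵀ = -(Sᵀ * Z * S)
        simp only [transpose_mul, transpose_transpose, hZt, mul_neg, neg_mul, mul_assoc])
  rw [hmem] at hres
  have hfin : S * ((Sᵀ * Z * S) * Sᵀ) = Z := by
    simp only [mul_assoc, l2]
    rw [hS', mul_one]
  rwa [hfin] at hres
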